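/- arXiv:2004.04457 — 2 statements merged into one kernel-verified Lean document; each statement's English description precedes it below -/
import Mathlib

section
/- Let ℓ ≥ 2 and a be natural numbers with 2 ≤ a ≤ ℓ, let m ≥ 2 and r ≥ 0 be natural numbers, and let ε be a real number with 0 ≤ ε ≤ (a−1)/(ℓ−1). Let f be a uniformly random function from a set of r labelled positions to a set of m labelled values, let |𝒱| be the cardinality of the image of f, and set P_miss := ε·(m − |𝒱|)/m. Then E[ BinoTail(ℓ, a, P_miss) ] ≥ BinoTail(ℓ, a, ε·(1 − 1/m)^r). (Paper's Lemma 3; the paper states the hypothesis as ε ≤ a/ℓ, and the convexity needed for Jensen's inequality holds on [0,(a−1)/(ℓ−1)].) -/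
open Finset

/-- `binoTail ℓ a p = Σ_{j=a}^{ℓ} C(ℓ,j) p^j (1−p)^{ℓ−j}`, the probability mass
in the right tail of a Binomial(ℓ,p) distribution. -/
noncomputable def binoTail (ℓ a : ℕ) (p : ℝ) : ℝ :=
  ∑ j ∈ Finset.Icc a ℓ, (ℓ.choose j : ℝ) * p ^ j * (1 - p) ^ (ℓ - j)

lemma hasDerivAt_binoTail {ℓ a : ℕ} (ha : 1 ≤ a) (haℓ : a ≤ ℓ) (p : ℝ) :
    HasDerivAt (binoTail ℓ a)
      ((ℓ : ℝ) * ((ℓ-1).choose (a-1) : ℝ) * p ^ (a-1) * (1-p) ^ (ℓ-a)) p := by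
  set T : ℕ → ℝ := fun j => (ℓ : ℝ) * ((ℓ-1).choose j : ℝ) * p ^ j * (1-p) ^ (ℓ-1-j) with hT
  have key : ∀ j ∈ Finset.Icc a ℓ,
      HasDerivAt (fun q : ℝ => (ℓ.choose j : ℝ) * q ^ j * (1 - q) ^ (ℓ - j))
        (T (j-1) - T j) p := by
    intro j hj
    rw [Finset.mem_Icc] at hj
    have hj1 : 1 ≤ j := le_trans ha hj.1
    have h1 : HasDerivAt (fun q : ℝ => q ^ j) ((j:ℝ) * p ^ (j-1)) p := hasDerivAt_pow j p
    have hsub : HasDerivAt (fun q : ℝ => 1 - q) (-1) p := by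
      simpa using (hasDerivAt_id p).const_sub 1
    have h2 : HasDerivAt (fun q : ℝ => (1 - q) ^ (ℓ - j))
        (((ℓ-j : ℕ):ℝ) * (1-p) ^ (ℓ-j-1) * (-1)) p :=
      (hasDerivAt_pow (ℓ-j) (1-p)).comp p hsub
    have h3 := (h1.mul h2).const_mul ((ℓ.choose j : ℝ))
    have id1 : j * ℓ.choose j = ℓ * (ℓ-1).choose (j-1) := by
      have h := Nat.add_one_mul_choose_eq (ℓ-1) (j-1)
      have e1 : (ℓ-1) + 1 = ℓ := by omega
      have e2 : (j-1) + 1 = j := by omega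
      rw [e1, e2] at h
      rw [Nat.mul_comm j (ℓ.choose j)]
      exact h.symm
    have id2 : (ℓ - j) * ℓ.choose j = ℓ * (ℓ-1).choose j := by
      rcases Nat.lt_or_ge j ℓ with h | h
      · have e1 : ℓ * (ℓ-1).choose j = ℓ.choose (j+1) * (j+1) := by
          have h := Nat.add_one_mul_choose_eq (ℓ-1) j
          have e : (ℓ-1) + 1 = ℓ := by omega
          rw [e] at h
          exact h
        have e2 : ℓ.choose (j+1) * (j+1) = ℓ.choose j * (ℓ - j) :=
          Nat.choose_succ_right_eq ℓ j
        rw [e1, e2, Nat.mul_comm]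
      · have hje : j = ℓ := le_antisymm hj.2 h
        subst hje
        have : (j-1).choose j = 0 := Nat.choose_eq_zero_of_lt (by omega)
        simp [this]
    have c1 : ((j:ℝ)) * (ℓ.choose j : ℝ) = (ℓ:ℝ) * ((ℓ-1).choose (j-1) : ℝ) := by
      exact_mod_cast congrArg (Nat.cast (R := ℝ)) id1
    have c2 : (((ℓ-j:ℕ)):ℝ) * (ℓ.choose j : ℝ) = (ℓ:ℝ) * ((ℓ-1).choose j : ℝ) := by
      exact_mod_cast congrArg (Nat.cast (R := ℝ)) id2
    have heq : (ℓ.choose j : ℝ) * ((j:ℝ) * p ^ (j-1) * (1-p) ^ (ℓ-j)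
        + p ^ j * (((ℓ-j : ℕ):ℝ) * (1-p) ^ (ℓ-j-1) * (-1))) = T (j-1) - T j := by
      have e3 : ℓ - 1 - (j-1) = ℓ - j := by omega
      have e4 : ℓ - 1 - j = ℓ - j - 1 := by omega
      simp only [hT, e3, e4]
      linear_combination (p ^ (j-1) * (1-p) ^ (ℓ-j)) * c1 - (p ^ j * (1-p) ^ (ℓ-j-1)) * c2
    rw [← heq]
    simpa [mul_assoc] using h3
  have hsum := HasDerivAt.fun_sum key
  have hbt : binoTail ℓ a = fun q : ℝ => ∑ j ∈ Finset.Icc a ℓ,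
      (ℓ.choose j : ℝ) * q ^ j * (1 - q) ^ (ℓ - j) := rfl
  rw [hbt]
  refine hsum.congr_deriv (Eq.symm ?_)
  rw [← Finset.Ico_add_one_right_eq_Icc, Finset.sum_Ico_eq_sum_range]
  calc (ℓ : ℝ) * ((ℓ-1).choose (a-1) : ℝ) * p ^ (a-1) * (1-p) ^ (ℓ-a)
      = T (a-1) - T ℓ := by
        have h0 : (ℓ-1).choose ℓ = 0 := Nat.choose_eq_zero_of_lt (by omega)
        have e : ℓ - 1 - (a - 1) = ℓ - a := by omega
        simp [hT, h0, e]
    _ = (fun k => T (a - 1 + k)) 0 - (fun k => T (a - 1 + k)) (ℓ + 1 - a) := by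
        simp only []
        congr 2 <;> omega
    _ = ∑ i ∈ Finset.range (ℓ + 1 - a), ((fun k => T (a - 1 + k)) i - (fun k => T (a - 1 + k)) (i+1)) := (Finset.sum_range_sub' (fun k => T (a - 1 + k)) (ℓ + 1 - a)).symm
    _ = ∑ i ∈ Finset.range (ℓ + 1 - a), (T (a + i - 1) - T (a + i)) := by
        refine Finset.sum_congr rfl fun i _ => ?_
        have e1 : a + i - 1 = a - 1 + i := by omega
        have e2 : a + i = a - 1 + (i + 1) := by omega
        rw [e1, e2]

lemma monotoneOn_derivFun {ℓ a : ℕ} (hℓ : 2 ≤ ℓ) (ha : 2 ≤ a) (haℓ : a ≤ ℓ) :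
    MonotoneOn (fun p : ℝ => (ℓ : ℝ) * ((ℓ-1).choose (a-1) : ℝ) * p ^ (a-1) * (1-p) ^ (ℓ-a))
      (Set.Icc 0 (((a:ℝ)-1)/((ℓ:ℝ)-1))) := by
  set t : ℝ := ((a:ℝ)-1)/((ℓ:ℝ)-1) with htdef
  have hℓ1 : (1:ℝ) ≤ (ℓ:ℝ) - 1 := by
    have : (2:ℝ) ≤ (ℓ:ℝ) := by exact_mod_cast hℓ
    linarith
  have ha1 : (1:ℝ) ≤ (a:ℝ) - 1 := by
    have : (2:ℝ) ≤ (a:ℝ) := by exact_mod_cast ha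
    linarith
  have ht1 : t ≤ 1 := by
    rw [htdef, div_le_one (by linarith)]
    have : (a:ℝ) ≤ (ℓ:ℝ) := by exact_mod_cast haℓ
    linarith
  have ht0 : 0 < t := by positivity
  -- derivative of the inner function
  have hD : ∀ p : ℝ, HasDerivAt (fun q : ℝ => q ^ (a-1) * (1-q) ^ (ℓ-a))
      (((a:ℝ)-1) * p ^ (a-2) * (1-p) ^ (ℓ-a)
        - ((ℓ:ℝ)-(a:ℝ)) * p ^ (a-1) * (1-p) ^ (ℓ-a-1)) p := by
    intro p
    have h1 : HasDerivAt (fun q : ℝ => q ^ (a-1)) (((a-1:ℕ):ℝ) * p ^ (a-1-1)) p :=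
      hasDerivAt_pow (a-1) p
    have hsub : HasDerivAt (fun q : ℝ => 1 - q) (-1) p := by
      simpa using (hasDerivAt_id p).const_sub 1
    have h2 : HasDerivAt (fun q : ℝ => (1 - q) ^ (ℓ - a))
        (((ℓ-a : ℕ):ℝ) * (1-p) ^ (ℓ-a-1) * (-1)) p :=
      (hasDerivAt_pow (ℓ-a) (1-p)).comp p hsub
    have := h1.fun_mul h2
    refine this.congr_deriv (Eq.symm ?_)
    have e1 : a - 1 - 1 = a - 2 := by omega
    have c1 : ((a-1:ℕ):ℝ) = (a:ℝ) - 1 := by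
      have : (1:ℕ) ≤ a := by omega
      push_cast [this]; ring
    have c2 : ((ℓ-a:ℕ):ℝ) = (ℓ:ℝ) - (a:ℝ) := by
      push_cast [haℓ]; ring
    rw [e1, c1, c2]; ring
  -- nonnegativity of the derivative on the interval
  have hnonneg : ∀ p ∈ Set.Icc (0:ℝ) t,
      0 ≤ ((a:ℝ)-1) * p ^ (a-2) * (1-p) ^ (ℓ-a)
        - ((ℓ:ℝ)-(a:ℝ)) * p ^ (a-1) * (1-p) ^ (ℓ-a-1) := by
    intro p hp
    obtain ⟨hp0, hpt⟩ := hp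
    have hp1 : p ≤ 1 := le_trans hpt ht1
    rcases Nat.eq_or_lt_of_le haℓ with h | h
    · -- a = ℓ
      have e0 : ℓ - a = 0 := by omega
      rw [e0]
      simp only [pow_zero, mul_one]
      have : (ℓ:ℝ) - (a:ℝ) = 0 := by
        rw [h]; ring
      rw [this]
      have : 0 ≤ ((a:ℝ)-1) * p ^ (a-2) := by positivity
      simpa using this
    · -- a < ℓ
      have e1 : a - 1 = (a - 2) + 1 := by omega
      have e2 : ℓ - a = (ℓ - a - 1) + 1 := by omega
      have key : ((a:ℝ)-1) * p ^ (a-2) * (1-p) ^ (ℓ-a)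
          - ((ℓ:ℝ)-(a:ℝ)) * p ^ (a-1) * (1-p) ^ (ℓ-a-1)
          = p ^ (a-2) * (1-p) ^ (ℓ-a-1) * (((a:ℝ)-1) - ((ℓ:ℝ)-1) * p) := by
        obtain ⟨k, hk1, hk2⟩ : ∃ k, ℓ - a - 1 = k ∧ ℓ - a = k + 1 :=
          ⟨ℓ - a - 1, rfl, by omega⟩
        obtain ⟨n, hn1, hn2⟩ : ∃ n, a - 2 = n ∧ a - 1 = n + 1 :=
          ⟨a - 2, rfl, by omega⟩
        rw [hk1, hk2, hn1, hn2]
        ring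
      rw [key]
      have h1 : 0 ≤ p ^ (a-2) := by positivity
      have h2 : 0 ≤ (1-p) ^ (ℓ-a-1) := pow_nonneg (by linarith) _
      have h3 : 0 ≤ ((a:ℝ)-1) - ((ℓ:ℝ)-1) * p := by
        have := (le_div_iff₀ (by linarith : (0:ℝ) < (ℓ:ℝ)-1)).mp hpt
        nlinarith
      positivity
  have hmono : MonotoneOn (fun p : ℝ => p ^ (a-1) * (1-p) ^ (ℓ-a)) (Set.Icc 0 t) := by
    apply monotoneOn_of_deriv_nonneg (convex_Icc _ _)
    · exact (Continuous.continuousOn (by continuity))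
    · intro x hx
      exact ((hD x).differentiableAt).differentiableWithinAt
    · intro x hx
      rw [interior_Icc] at hx
      rw [(hD x).deriv]
      exact hnonneg x (Set.mem_Icc_of_Ioo hx)
  intro x hx y hy hxy
  have hC : 0 ≤ (ℓ : ℝ) * ((ℓ-1).choose (a-1) : ℝ) := by positivity
  have := mul_le_mul_of_nonneg_left (hmono hx hy hxy) hC
  simpa [mul_assoc] using this

lemma convexOn_binoTail {ℓ a : ℕ} (hℓ : 2 ≤ ℓ) (ha : 2 ≤ a) (haℓ : a ≤ ℓ) :
    ConvexOn ℝ (Set.Icc (0:ℝ) (((a:ℝ)-1)/((ℓ:ℝ)-1))) (binoTail ℓ a) := by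
  apply MonotoneOn.convexOn_of_deriv (convex_Icc _ _)
  · apply Continuous.continuousOn
    unfold binoTail
    exact continuous_finset_sum _ fun j _ => by continuity
  · intro x hx
    exact ((hasDerivAt_binoTail (by omega) haℓ x).differentiableAt).differentiableWithinAt
  · have h := monotoneOn_derivFun hℓ ha haℓ
    rw [interior_Icc]
    intro x hx y hy hxy
    rw [(hasDerivAt_binoTail (by omega) haℓ x).deriv,
        (hasDerivAt_binoTail (by omega) haℓ y).deriv]
    exact h (Set.mem_Icc_of_Ioo hx) (Set.mem_Icc_of_Ioo hy) hxy

lemma count_avoid (m r : ℕ) (v : Fin m) :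
    (Finset.univ.filter (fun f : Fin r → Fin m => v ∉ Finset.image f Finset.univ)).card
      = (m - 1) ^ r := by
  have h1 : (Finset.univ.filter (fun f : Fin r → Fin m => v ∉ Finset.image f Finset.univ)).card
      = Fintype.card {f : Fin r → Fin m // ∀ i, f i ≠ v} := by
    rw [Fintype.card_subtype]
    congr 1
    apply Finset.filter_congr
    intro f _
    simp [Finset.mem_image, eq_comm]
  rw [h1]
  rw [Fintype.card_congr (Equiv.subtypePiEquivPi (p := fun _ x => x ≠ v))]
  rw [Fintype.card_pi]
  have : Fintype.card {x : Fin m // x ≠ v} = m - 1 := by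
    simp only [ne_eq]
    rw [Fintype.card_subtype_compl]
    simp [Fintype.card_subtype_eq]
  simp [this]

lemma sum_miss (m r : ℕ) (hm : 1 ≤ m) :
    ∑ f : Fin r → Fin m, ((m:ℝ) - ((Finset.image f Finset.univ).card : ℝ))
      = (m:ℝ) * ((m:ℝ) - 1) ^ r := by
  have key : ∀ f : Fin r → Fin m,
      (m:ℝ) - ((Finset.image f Finset.univ).card : ℝ)
        = ∑ v : Fin m, if v ∉ Finset.image f Finset.univ then (1:ℝ) else 0 := by
    intro f
    rw [Finset.sum_boole]
    rw [Finset.filter_not, Finset.filter_univ_mem]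
    rw [Finset.card_sdiff_of_subset (Finset.subset_univ _)]
    rw [Finset.card_univ, Nat.cast_sub (Finset.card_le_univ _)]
    simp
  calc ∑ f : Fin r → Fin m, ((m:ℝ) - ((Finset.image f Finset.univ).card : ℝ))
      = ∑ f : Fin r → Fin m, ∑ v : Fin m,
          if v ∉ Finset.image f Finset.univ then (1:ℝ) else 0 := by
        exact Finset.sum_congr rfl fun f _ => key f
    _ = ∑ v : Fin m, ∑ f : Fin r → Fin m,
          if v ∉ Finset.image f Finset.univ then (1:ℝ) else 0 := Finset.sum_comm
    _ = ∑ v : Fin m, (((m-1)^r : ℕ) : ℝ) := by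
        refine Finset.sum_congr rfl fun v _ => ?_
        rw [Finset.sum_boole, count_avoid]
    _ = (m:ℝ) * ((m:ℝ) - 1) ^ r := by
        rw [Finset.sum_const]
        simp only [Finset.card_univ, Fintype.card_fin, nsmul_eq_mul]
        push_cast [hm]
        ring

/-- **Paper's Lemma 3.**  For a uniformly random function `f : [r] → [m]`,
with `|𝒱|` the cardinality of the image of `f` and
`P_miss := ε·(m − |𝒱|)/m`, one has
`E[ BinoTail(ℓ, a, P_miss) ] ≥ BinoTail(ℓ, a, ε·(1 − 1/m)^r)`,
provided `2 ≤ a ≤ ℓ` and `0 ≤ ε ≤ (a−1)/(ℓ−1)`. -/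
theorem expected_binoTail_ge (ℓ a m r : ℕ) (hℓ : 2 ≤ ℓ) (ha : 2 ≤ a) (haℓ : a ≤ ℓ)
    (hm : 2 ≤ m) (ε : ℝ) (hε0 : 0 ≤ ε) (hε1 : ε ≤ ((a : ℝ) - 1) / ((ℓ : ℝ) - 1)) :
    (∑ f : Fin r → Fin m,
        binoTail ℓ a (ε * ((m : ℝ) - ((Finset.image f Finset.univ).card : ℝ)) / (m : ℝ)))
      / (m : ℝ) ^ r
      ≥ binoTail ℓ a (ε * (1 - 1 / (m : ℝ)) ^ r) := by
  have hm0 : (0:ℝ) < (m:ℝ) := by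
    have : (2:ℝ) ≤ (m:ℝ) := by exact_mod_cast hm
    linarith
  set z : (Fin r → Fin m) → ℝ :=
    fun f => ε * ((m : ℝ) - ((Finset.image f Finset.univ).card : ℝ)) / (m : ℝ) with hz
  set N : ℝ := (m:ℝ)^r with hN
  have hNpos : (0:ℝ) < N := by positivity
  have hconv := convexOn_binoTail hℓ ha haℓ
  have hw1 : ∑ _f : Fin r → Fin m, (N⁻¹) = 1 := by
    rw [Finset.sum_const, Finset.card_univ, Fintype.card_fun]
    simp only [Fintype.card_fin, nsmul_eq_mul, hN]
    push_cast
    field_simp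
  have hcard : ∀ f : Fin r → Fin m,
      ((Finset.image f Finset.univ).card : ℝ) ≤ (m:ℝ) := by
    intro f
    have := Finset.card_le_univ (Finset.image f Finset.univ)
    rw [Fintype.card_fin] at this
    exact_mod_cast this
  have hcard0 : ∀ f : Fin r → Fin m,
      (0:ℝ) ≤ ((Finset.image f Finset.univ).card : ℝ) := fun f => by positivity
  have hmem : ∀ f : Fin r → Fin m, z f ∈ Set.Icc (0:ℝ) (((a:ℝ)-1)/((ℓ:ℝ)-1)) := by
    intro f
    constructor
    · apply div_nonneg _ hm0.le
      exact mul_nonneg hε0 (by linarith [hcard f])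
    · have h1 : z f ≤ ε := by
        rw [hz]
        simp only []
        rw [mul_div_assoc]
        have : ((m : ℝ) - ((Finset.image f Finset.univ).card : ℝ)) / (m : ℝ) ≤ 1 := by
          rw [div_le_one hm0]
          linarith [hcard0 f]
        nlinarith
      exact le_trans h1 hε1
  have jensen := hconv.map_sum_le (t := Finset.univ) (w := fun _ => N⁻¹) (p := z)
    (fun f _ => inv_nonneg.2 hNpos.le) hw1 (fun f _ => hmem f)
  have harg : ∑ f : Fin r → Fin m, N⁻¹ • z f = ε * (1 - 1 / (m : ℝ)) ^ r := by
    simp only [smul_eq_mul]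
    rw [← Finset.mul_sum]
    have : ∑ f : Fin r → Fin m, z f
        = (ε / m) * ∑ f : Fin r → Fin m, ((m : ℝ) - ((Finset.image f Finset.univ).card : ℝ)) := by
      rw [Finset.mul_sum]
      exact Finset.sum_congr rfl fun f _ => by rw [hz]; ring
    rw [this, sum_miss m r (by omega)]
    have hone : (1 : ℝ) - 1 / (m:ℝ) = ((m:ℝ) - 1) / (m:ℝ) := by field_simp
    rw [hone, div_pow, hN]
    field_simp
  have hrhs : ∑ f : Fin r → Fin m, N⁻¹ • binoTail ℓ a (z f)
      = (∑ f : Fin r → Fin m, binoTail ℓ a (z f)) / N := by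
    simp only [smul_eq_mul]
    rw [← Finset.mul_sum, inv_mul_eq_div]
  rw [harg, hrhs] at jensen
  exact jensen
end

section
/- Let ℓ and a be natural numbers with 2 ≤ a ≤ ℓ. The function p ↦ BinoTail(ℓ,a,p) = Σ_{j=a}^{ℓ} C(ℓ,j) p^j (1−p)^{ℓ−j} is convex on the interval [0, (a−1)/(ℓ−1)]. (This makes precise the paper's claim that BinoTail(ℓ,a,·), as a function of p, has a sigmoid shape which is convex for p up to approximately a/ℓ.) -/
open Finset

lemma choose_id1 (ℓ j : ℕ) (hj : 1 ≤ j) (hℓ : 1 ≤ ℓ) :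
    ℓ.choose j * j = ℓ * (ℓ - 1).choose (j - 1) := by
  obtain ⟨n, rfl⟩ : ∃ n, ℓ = n + 1 := ⟨ℓ - 1, by omega⟩
  obtain ⟨k, rfl⟩ : ∃ k, j = k + 1 := ⟨j - 1, by omega⟩
  simpa [Nat.succ_eq_add_one, mul_comm] using (Nat.add_one_mul_choose_eq n k).symm

lemma choose_id2 (ℓ j : ℕ) (hj : j ≤ ℓ) (hℓ : 1 ≤ ℓ) :
    ℓ.choose j * (ℓ - j) = ℓ * (ℓ - 1).choose j := by
  rcases eq_or_lt_of_le hj with rfl | hlt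
  · rw [Nat.sub_self, Nat.mul_zero, Nat.choose_eq_zero_of_lt (by omega), Nat.mul_zero]
  · have h1 : ℓ.choose (ℓ - j) = ℓ.choose j := Nat.choose_symm hj
    have h2 := choose_id1 ℓ (ℓ - j) (by omega) hℓ
    have h3 : (ℓ - 1).choose (ℓ - j - 1) = (ℓ - 1).choose j := by
      rw [show ℓ - j - 1 = (ℓ - 1) - j by omega, Nat.choose_symm (by omega)]
    rw [← h1, h2, h3]

/-- Auxiliary telescoping function. -/
noncomputable def ufun (ℓ : ℕ) (j : ℕ) (p : ℝ) : ℝ :=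
  (ℓ : ℝ) * ((ℓ - 1).choose (j - 1) : ℝ) * (p ^ (j - 1) * (1 - p) ^ (ℓ - j))

lemma binoTail_hasDerivAt (ℓ a : ℕ) (ha : 2 ≤ a) (haℓ : a ≤ ℓ) (p : ℝ) :
    HasDerivAt (binoTail ℓ a)
      ((ℓ : ℝ) * ((ℓ - 1).choose (a - 1) : ℝ) * (p ^ (a - 1) * (1 - p) ^ (ℓ - a))) p := by
  have hℓ1 : 1 ≤ ℓ := by omega
  have key : ∀ j ∈ Finset.Icc a ℓ,
      HasDerivAt (fun q : ℝ => (ℓ.choose j : ℝ) * q ^ j * (1 - q) ^ (ℓ - j))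
        (ufun ℓ j p - ufun ℓ (j + 1) p) p := by
    intro j hj
    simp only [Finset.mem_Icc] at hj
    have h1 : HasDerivAt (fun q : ℝ => q ^ j) ((j : ℝ) * p ^ (j - 1)) p := hasDerivAt_pow j p
    have h2 : HasDerivAt (fun q : ℝ => (1 - q) ^ (ℓ - j))
        (((ℓ - j : ℕ) : ℝ) * (1 - p) ^ (ℓ - j - 1) * (-1)) p :=
      ((hasDerivAt_id p).const_sub 1).pow (ℓ - j)
    have h3 : HasDerivAt (fun q : ℝ => (ℓ.choose j : ℝ) * q ^ j * (1 - q) ^ (ℓ - j))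
        (((ℓ.choose j : ℝ) * ((j : ℝ) * p ^ (j - 1))) * (1 - p) ^ (ℓ - j)
          + ((ℓ.choose j : ℝ) * p ^ j) * (((ℓ - j : ℕ) : ℝ) * (1 - p) ^ (ℓ - j - 1) * (-1))) p :=
      (h1.const_mul (ℓ.choose j : ℝ)).mul h2
    convert h3 using 1
    have e1 : (ℓ.choose j : ℝ) * (j : ℝ) = (ℓ : ℝ) * ((ℓ - 1).choose (j - 1) : ℝ) := by
      exact_mod_cast congrArg (Nat.cast : ℕ → ℝ) (choose_id1 ℓ j (by omega) hℓ1)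
    have e2 : (ℓ : ℝ) * ((ℓ - 1).choose j : ℝ) = (ℓ.choose j : ℝ) * ((ℓ - j : ℕ) : ℝ) := by
      exact_mod_cast (congrArg (Nat.cast : ℕ → ℝ) (choose_id2 ℓ j hj.2 hℓ1)).symm
    have hu1 : ufun ℓ j p = (ℓ.choose j : ℝ) * (j : ℝ) * (p ^ (j - 1) * (1 - p) ^ (ℓ - j)) := by
      rw [ufun, e1]
    have hu2 : ufun ℓ (j + 1) p
        = (ℓ.choose j : ℝ) * ((ℓ - j : ℕ) : ℝ) * (p ^ j * (1 - p) ^ (ℓ - j - 1)) := by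
      rw [ufun, Nat.add_sub_cancel, e2, show ℓ - (j + 1) = ℓ - j - 1 by omega]
    rw [hu1, hu2]; ring
  have hsum := HasDerivAt.fun_sum key
  have htel : ∑ j ∈ Finset.Icc a ℓ, (ufun ℓ j p - ufun ℓ (j + 1) p)
      = ufun ℓ a p - ufun ℓ (ℓ + 1) p := by
    rw [← Finset.Ico_add_one_right_eq_Icc, Finset.sum_Ico_eq_sum_range]
    have htel' := Finset.sum_range_sub' (fun i => ufun ℓ (a + i) p) (ℓ + 1 - a)
    simp only [add_zero] at htel'
    calc ∑ k ∈ Finset.range (ℓ + 1 - a), (ufun ℓ (a + k) p - ufun ℓ (a + k + 1) p)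
        = ∑ k ∈ Finset.range (ℓ + 1 - a),
            ((fun i => ufun ℓ (a + i) p) k - (fun i => ufun ℓ (a + i) p) (k + 1)) := by
          apply Finset.sum_congr rfl; intro k _; simp [add_assoc]
      _ = ufun ℓ a p - ufun ℓ (a + (ℓ + 1 - a)) p := htel'
      _ = ufun ℓ a p - ufun ℓ (ℓ + 1) p := by congr 2; omega
  have hend : ufun ℓ (ℓ + 1) p = 0 := by
    have h0 : (ℓ - 1).choose (ℓ + 1 - 1) = 0 := Nat.choose_eq_zero_of_lt (by omega)
    rw [ufun, h0]
    simp
  rw [htel, hend, sub_zero] at hsum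
  exact hsum

/-- For `2 ≤ a ≤ ℓ`, the function `p ↦ BinoTail(ℓ,a,p)` is convex on the
interval `[0, (a−1)/(ℓ−1)]`. -/
theorem binoTail_convexOn (ℓ a : ℕ) (ha : 2 ≤ a) (haℓ : a ≤ ℓ) :
    ConvexOn ℝ (Set.Icc (0 : ℝ) (((a : ℝ) - 1) / ((ℓ : ℝ) - 1))) (binoTail ℓ a) := by
  have hℓ2 : 2 ≤ ℓ := le_trans ha haℓ
  have hℓ1 : (0 : ℝ) < (ℓ : ℝ) - 1 := by
    have : (2 : ℝ) ≤ (ℓ : ℝ) := by exact_mod_cast hℓ2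
    linarith
  have ha1 : (0 : ℝ) < (a : ℝ) - 1 := by
    have : (2 : ℝ) ≤ (a : ℝ) := by exact_mod_cast ha
    linarith
  set e : ℝ := ((a : ℝ) - 1) / ((ℓ : ℝ) - 1) with he
  have he_pos : 0 < e := div_pos ha1 hℓ1
  have he_le_one : e ≤ 1 := by
    rw [he, div_le_one hℓ1]
    have : (a : ℝ) ≤ (ℓ : ℝ) := by exact_mod_cast haℓ
    linarith
  set c : ℝ := (ℓ : ℝ) * ((ℓ - 1).choose (a - 1) : ℝ) with hc
  have hc_nonneg : 0 ≤ c := by positivity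
  set g : ℝ → ℝ := fun p => c * (p ^ (a - 1) * (1 - p) ^ (ℓ - a)) with hg
  have hderiv : ∀ p : ℝ, HasDerivAt (binoTail ℓ a) (g p) p :=
    fun p => binoTail_hasDerivAt ℓ a ha haℓ p
  have hderiv_eq : ∀ p : ℝ, deriv (binoTail ℓ a) p = g p := fun p => (hderiv p).deriv
  -- derivative of g
  have hg_deriv : ∀ p : ℝ, HasDerivAt g
      (c * (((a - 1 : ℕ) : ℝ) * p ^ (a - 2) * (1 - p) ^ (ℓ - a)
        - ((ℓ - a : ℕ) : ℝ) * p ^ (a - 1) * (1 - p) ^ (ℓ - a - 1))) p := by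
    intro p
    have h1 : HasDerivAt (fun q : ℝ => q ^ (a - 1)) (((a - 1 : ℕ) : ℝ) * p ^ (a - 1 - 1)) p :=
      hasDerivAt_pow (a - 1) p
    have h2 : HasDerivAt (fun q : ℝ => (1 - q) ^ (ℓ - a))
        (((ℓ - a : ℕ) : ℝ) * (1 - p) ^ (ℓ - a - 1) * (-1)) p :=
      ((hasDerivAt_id p).const_sub 1).pow (ℓ - a)
    have h3 := (h1.mul h2).const_mul c
    refine h3.congr_deriv ?_
    rw [show a - 1 - 1 = a - 2 by omega]; ring
  -- g is monotone on [0, e]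
  have hg_mono : MonotoneOn g (Set.Icc (0 : ℝ) e) := by
    apply monotoneOn_of_deriv_nonneg (convex_Icc 0 e)
    · exact fun x _ => (hg_deriv x).differentiableAt.continuousAt.continuousWithinAt
    · intro x _; exact (hg_deriv x).differentiableAt.differentiableWithinAt
    · intro x hx
      rw [interior_Icc] at hx
      rw [(hg_deriv x).deriv]
      have hx0 : 0 < x := hx.1
      have hxe : x < e := hx.2
      have hx1 : x < 1 := lt_of_lt_of_le hxe he_le_one
      apply mul_nonneg hc_nonneg
      rcases eq_or_lt_of_le haℓ with rfl | hlt
      -- case a = ℓ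
      · simp only [Nat.sub_self, pow_zero, Nat.cast_zero, Nat.zero_sub, zero_mul, mul_one,
          sub_zero]
        positivity
      -- case a < ℓ
      · have key : ((a - 1 : ℕ) : ℝ) * x ^ (a - 2) * (1 - x) ^ (ℓ - a)
            - ((ℓ - a : ℕ) : ℝ) * x ^ (a - 1) * (1 - x) ^ (ℓ - a - 1)
            = x ^ (a - 2) * (1 - x) ^ (ℓ - a - 1)
              * (((a - 1 : ℕ) : ℝ) * (1 - x) - ((ℓ - a : ℕ) : ℝ) * x) := by
          obtain ⟨m, hm⟩ : ∃ m, ℓ - a = m + 1 := ⟨ℓ - a - 1, by omega⟩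
          obtain ⟨b, hb⟩ : ∃ b, a - 1 = b + 1 := ⟨a - 2, by omega⟩
          have hm' : ℓ - a - 1 = m := by omega
          have hb' : a - 2 = b := by omega
          rw [hm', hb', hm, hb, pow_succ, pow_succ]
          ring
        rw [key]
        apply mul_nonneg (mul_nonneg (pow_nonneg hx0.le _)
          (pow_nonneg (by linarith : (0:ℝ) ≤ 1 - x) _))
        have ca : ((a - 1 : ℕ) : ℝ) = (a : ℝ) - 1 := by
          push_cast [Nat.cast_sub (by omega : 1 ≤ a)]; ring
        have cl : ((ℓ - a : ℕ) : ℝ) = (ℓ : ℝ) - (a : ℝ) := by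
          push_cast [Nat.cast_sub haℓ]; ring
        rw [ca, cl]
        have hxa : x * ((ℓ : ℝ) - 1) < (a : ℝ) - 1 := (lt_div_iff₀ hℓ1).mp hxe
        nlinarith
  -- conclude
  apply MonotoneOn.convexOn_of_deriv (convex_Icc 0 e)
  · exact fun x _ => (hderiv x).differentiableAt.continuousAt.continuousWithinAt
  · intro x _
    exact (hderiv x).differentiableAt.differentiableWithinAt
  · intro x hx y hy hxy
    rw [interior_Icc] at hx hy
    rw [hderiv_eq, hderiv_eq]
    exact hg_mono ⟨le_of_lt hx.1, le_of_lt hx.2⟩ ⟨le_of_lt hy.1, le_of_lt hy.2⟩ hxy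
end
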